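/- Let C be a CSS code with K ≥ 1 and let C̃ be its thickened code with parameter l ≥ 2 and any choice function κ. Then the Z-distance is unchanged: d̃_Z = d_Z. -/

import Mathlib

open Matrix

/-- The weight of a vector over `F₂`: the number of nonzero entries. -/
def wt {α : Type*} [Fintype α] (v : α → ZMod 2) : ℕ :=
  (Finset.univ.filter fun j => v j ≠ 0).card

/-- Maximum weight of a row of a matrix over `F₂`. -/
def maxRowW {m α : Type*} [Fintype m] [Fintype α] (M : Matrix m α (ZMod 2)) : ℕ :=
  Finset.univ.sup fun i => wt (M i)

/-- Maximum weight of a column of a matrix over `F₂`. -/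
def maxColW {m α : Type*} [Fintype m] [Fintype α] (M : Matrix m α (ZMod 2)) : ℕ :=
  Finset.univ.sup fun j => wt fun i => M i j

/-- Total number of nonzero entries of a matrix over `F₂`. -/
def totW {m α : Type*} [Fintype m] [Fintype α] (M : Matrix m α (ZMod 2)) : ℕ :=
  ∑ i, wt (M i)

variable {N nX nZ : ℕ}

/-- Qubits of the thickened code: qubits `(q,k)` for `q` a qubit of `C` and `k ∈ {1,…,l}`
(0-indexed below), together with qubits `[s,k]` for `s` a row of `H_X` and
`k ∈ {1,…,l−1}`. -/
abbrev TQubit (N nX l : ℕ) : Type := (Fin N × Fin l) ⊕ (Fin nX × Fin (l - 1))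

/-- Row index type of the Z-type generator matrix of the thickened code: one generator for
each row of `H_Z` (type (i)), and one for each pair of a qubit `q` of `C` and
`k ∈ {1,…,l−1}` (type (ii)). -/
abbrev TZIdx (N nZ l : ℕ) : Type := Fin nZ ⊕ (Fin N × Fin (l - 1))

/-- X-type generator matrix of the thickened code: for each row `s` of `HX` with support
`{q₁,…,q_w}` and each `k ∈ {1,…,l}` (0-indexed here), one generator with support
`{(q₁,k),…,(q_w,k)} ∪ {[s,k−1],[s,k]}` (with `[s,0]`, `[s,l]` omitted at the ends). -/
def thickHX (HX : Matrix (Fin nX) (Fin N) (ZMod 2)) (l : ℕ) :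
    Matrix (Fin nX × Fin l) (TQubit N nX l) (ZMod 2) := fun s j =>
  match s, j with
  | (s, k), Sum.inl (p, k') => if k' = k then HX s p else 0
  | (s, k), Sum.inr (s', k') =>
      if s' = s ∧ ((k'.val = k.val) ∨ (k'.val + 1 = k.val)) then 1 else 0

/-- Z-type generator matrix of the thickened code with choice function `κ`:
(i) for each row `r` of `HZ` with support `{q₁,…,q_w}`, one generator with support
`{(q₁,κ(r)),…,(q_w,κ(r))}`; (ii) for each qubit `q` of `C` and each `k ∈ {1,…,l−1}`
(0-indexed here), one generator with support
`{(q,k),(q,k+1)} ∪ {[s,k] : row s of HX acts on q}`. -/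
def thickHZ (HX : Matrix (Fin nX) (Fin N) (ZMod 2)) (HZ : Matrix (Fin nZ) (Fin N) (ZMod 2))
    (l : ℕ) (κ : Fin nZ → Fin l) :
    Matrix (TZIdx N nZ l) (TQubit N nX l) (ZMod 2) := fun r j =>
  match r, j with
  | Sum.inl R, Sum.inl (p, k) => if k = κ R then HZ R p else 0
  | Sum.inl _, Sum.inr _ => 0
  | Sum.inr (p, k), Sum.inl (p', k') =>
      if p' = p ∧ ((k'.val = k.val) ∨ (k'.val = k.val + 1)) then 1 else 0
  | Sum.inr (p, k), Sum.inr (s, k') => if k'.val = k.val then HX s p else 0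

/-- `distX HX HZ` is the X-distance of the CSS code with generator matrices `HX`, `HZ`:
the minimum weight of a vector in `ker(HZ)` not lying in the row space of `HX`. -/
noncomputable def distX {mX mZ α : Type*} [Fintype mX] [Fintype mZ] [Fintype α]
    (HX : Matrix mX α (ZMod 2)) (HZ : Matrix mZ α (ZMod 2)) : ℕ :=
  sInf {k | ∃ v : α → ZMod 2, HZ.mulVec v = 0 ∧
    v ∉ Submodule.span (ZMod 2) (Set.range HX) ∧ wt v = k}

/-- `distZ HX HZ` is the Z-distance of the CSS code with generator matrices `HX`, `HZ`:
the minimum weight of a vector in `ker(HX)` not lying in the row space of `HZ`. -/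
noncomputable def distZ {mX mZ α : Type*} [Fintype mX] [Fintype mZ] [Fintype α]
    (HX : Matrix mX α (ZMod 2)) (HZ : Matrix mZ α (ZMod 2)) : ℕ :=
  sInf {k | ∃ v : α → ZMod 2, HX.mulVec v = 0 ∧
    v ∉ Submodule.span (ZMod 2) (Set.range HZ) ∧ wt v = k}

namespace Stmt9Aux

lemma z2 : ∀ a b : ZMod 2, a + b = 0 → a = b := by decide

lemma z2' : ∀ a x y : ZMod 2, a + (x + y) = 0 → x = a + y := by decide

lemma sum_ite_val {β : Type*} [AddCommMonoid β] {n : ℕ} (m : ℕ) (hm : m < n) (f : Fin n → β) :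
    (∑ k : Fin n, if k.val = m then f k else 0) = f ⟨m, hm⟩ := by
  have h : ∀ k : Fin n, (if k.val = m then f k else 0) = (if k = ⟨m, hm⟩ then f k else 0) := by
    intro k; congr 1; simp [Fin.ext_iff]
  simp only [h]
  simp

/-- Embedding of a vector on the base qubits into the thickened qubits, at layer `k0`. -/
def embed {N l : ℕ} (nX : ℕ) (k0 : Fin l) (v : Fin N → ZMod 2) : TQubit N nX l → ZMod 2 :=
  fun j => match j with
  | Sum.inl (q, k) => if k = k0 then v q else 0
  | Sum.inr _ => 0

/-- Collapse of a vector on the thickened qubits: sum over all layers. -/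
def collapse {N nX l : ℕ} (w : TQubit N nX l → ZMod 2) : Fin N → ZMod 2 :=
  fun q => ∑ k : Fin l, w (Sum.inl (q, k))

lemma collapse_embed {l : ℕ} (k0 : Fin l) (v : Fin N → ZMod 2) :
    collapse (embed nX k0 v) = v := by
  funext q
  simp [collapse, embed]

lemma wt_embed {l : ℕ} (k0 : Fin l) (v : Fin N → ZMod 2) :
    wt (embed nX k0 v) = wt v := by
  unfold wt
  rw [Finset.card_filter, Finset.card_filter, Fintype.sum_sum_type, Fintype.sum_prod_type]
  have h1 : ∀ q : Fin N,
      (∑ k : Fin l, if embed nX k0 v (Sum.inl (q, k)) ≠ 0 then 1 else 0) =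
        (if v q ≠ 0 then 1 else 0) := by
    intro q
    rw [Finset.sum_eq_single k0]
    · simp [embed]
    · intro k _ hk; simp [embed, hk]
    · simp
  simp only [h1]
  simp [embed]

lemma wt_collapse_le {l : ℕ} (k0 : Fin l) (w : TQubit N nX l → ZMod 2) :
    wt (collapse w) ≤ wt w := by
  unfold wt
  have hex : ∀ q : Fin N, collapse w q ≠ 0 → ∃ k : Fin l, w (Sum.inl (q, k)) ≠ 0 := by
    intro q hq
    by_contra h
    push_neg at h
    exact hq (Finset.sum_eq_zero fun k _ => h k)
  classical
  set f : Fin N → TQubit N nX l := fun q =>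
    if h : ∃ k : Fin l, w (Sum.inl (q, k)) ≠ 0 then Sum.inl (q, h.choose) else Sum.inl (q, k0)
    with hf
  apply Finset.card_le_card_of_injOn f
  · intro q hq
    simp only [Finset.mem_coe, Finset.mem_filter, Finset.mem_univ, true_and] at hq ⊢
    have h := hex q hq
    rw [hf]; simp only [dif_pos h]
    exact h.choose_spec
  · intro a _ b _ hab
    rw [hf] at hab
    by_cases ha : ∃ k : Fin l, w (Sum.inl (a, k)) ≠ 0 <;>
      by_cases hb : ∃ k : Fin l, w (Sum.inl (b, k)) ≠ 0 <;>
      simp [ha, hb] at hab <;> first | exact hab | exact hab.1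

lemma thickHX_mulVec_apply (HX : Matrix (Fin nX) (Fin N) (ZMod 2)) {l : ℕ}
    (w : TQubit N nX l → ZMod 2) (s : Fin nX) (k : Fin l) :
    (thickHX HX l).mulVec w (s, k) =
      (∑ p, HX s p * w (Sum.inl (p, k)))
        + ∑ k' : Fin (l - 1),
            if k'.val = k.val ∨ k'.val + 1 = k.val then w (Sum.inr (s, k')) else 0 := by
  rw [Matrix.mulVec, dotProduct, Fintype.sum_sum_type]
  congr 1
  · rw [Fintype.sum_prod_type]
    apply Finset.sum_congr rfl
    intro p _
    rw [Finset.sum_eq_single k]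
    · simp [thickHX]
    · intro k' _ hk'; simp [thickHX, hk']
    · simp
  · rw [Fintype.sum_prod_type, Finset.sum_eq_single s]
    · apply Finset.sum_congr rfl
      intro k' _
      simp only [thickHX]
      split_ifs with h1 h2 h3 <;> simp_all
    · intro s' _ hs'
      apply Finset.sum_eq_zero
      intro k' _
      simp [thickHX, hs']
    · simp

lemma thickHZ_layer_sum_inl (HX : Matrix (Fin nX) (Fin N) (ZMod 2))
    (HZ : Matrix (Fin nZ) (Fin N) (ZMod 2)) {l : ℕ} (κ : Fin nZ → Fin l)
    (R : Fin nZ) (q : Fin N) :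
    (∑ k : Fin l, thickHZ HX HZ l κ (Sum.inl R) (Sum.inl (q, k))) = HZ R q := by
  simp [thickHZ]

lemma thickHZ_layer_sum_inr (HX : Matrix (Fin nX) (Fin N) (ZMod 2))
    (HZ : Matrix (Fin nZ) (Fin N) (ZMod 2)) {l : ℕ} (κ : Fin nZ → Fin l)
    (x : Fin N × Fin (l - 1)) (q : Fin N) :
    (∑ k : Fin l, thickHZ HX HZ l κ (Sum.inr x) (Sum.inl (q, k))) = 0 := by
  obtain ⟨p, k''⟩ := x
  by_cases hq : q = p
  · subst hq
    have hsplit : ∀ k : Fin l,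
        thickHZ HX HZ l κ (Sum.inr (q, k'')) (Sum.inl (q, k)) =
          (if k.val = k''.val then 1 else 0) + (if k.val = k''.val + 1 then 1 else 0) := by
      intro k
      simp only [thickHZ]
      split_ifs with h1 h2 h3 <;> simp_all
    simp only [hsplit]
    rw [Finset.sum_add_distrib]
    have h1 : k''.val < l := by have := k''.isLt; omega
    have h2 : k''.val + 1 < l := by have := k''.isLt; omega
    rw [sum_ite_val k''.val h1, sum_ite_val (k''.val + 1) h2]
    decide
  · simp [thickHZ, hq]

lemma collapse_mem_span (HX : Matrix (Fin nX) (Fin N) (ZMod 2))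
    (HZ : Matrix (Fin nZ) (Fin N) (ZMod 2)) {l : ℕ} (κ : Fin nZ → Fin l)
    (u : TQubit N nX l → ZMod 2)
    (hu : u ∈ Submodule.span (ZMod 2) (Set.range (thickHZ HX HZ l κ))) :
    collapse u ∈ Submodule.span (ZMod 2) (Set.range HZ) := by
  erw [Submodule.mem_span_range_iff_exists_fun] at hu ⊢
  obtain ⟨c, hc⟩ := hu
  refine ⟨fun R => c (Sum.inl R), ?_⟩
  funext q
  rw [Finset.sum_apply]
  have key : collapse u q =
      ∑ r : TZIdx N nZ l, c r * (∑ k : Fin l, thickHZ HX HZ l κ r (Sum.inl (q, k))) := by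
    rw [collapse]
    calc (∑ k : Fin l, u (Sum.inl (q, k)))
        = ∑ k : Fin l, ∑ r : TZIdx N nZ l,
            c r * thickHZ HX HZ l κ r (Sum.inl (q, k)) := by
          apply Finset.sum_congr rfl
          intro k _
          rw [← hc, Finset.sum_apply]
          simp [smul_eq_mul]
      _ = _ := by
          rw [Finset.sum_comm]
          simp [Finset.mul_sum]
  rw [key, Fintype.sum_sum_type]
  have h2 : (∑ x : Fin N × Fin (l - 1),
      c (Sum.inr x) * (∑ k : Fin l, thickHZ HX HZ l κ (Sum.inr x) (Sum.inl (q, k)))) = 0 := by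
    apply Finset.sum_eq_zero
    intro x _
    rw [thickHZ_layer_sum_inr, mul_zero]
  rw [h2, add_zero]
  apply Finset.sum_congr rfl
  intro R _
  rw [thickHZ_layer_sum_inl]
  simp [smul_eq_mul]

lemma orth_inl (HX : Matrix (Fin nX) (Fin N) (ZMod 2)) (HZ : Matrix (Fin nZ) (Fin N) (ZMod 2))
    (hCSS : HX * HZ.transpose = 0) {l : ℕ} (κ : Fin nZ → Fin l) (R : Fin nZ) :
    (thickHX HX l).mulVec (fun j => thickHZ HX HZ l κ (Sum.inl R) j) = 0 := by
  funext sk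
  obtain ⟨s, k⟩ := sk
  simp only [Pi.zero_apply]
  rw [thickHX_mulVec_apply]
  have h2 : (∑ k' : Fin (l - 1),
      if k'.val = k.val ∨ k'.val + 1 = k.val then
        thickHZ HX HZ l κ (Sum.inl R) (Sum.inr (s, k')) else 0) = 0 := by
    apply Finset.sum_eq_zero; intro k' _; simp [thickHZ]
  rw [h2, add_zero]
  have h1 : ∀ p, HX s p * thickHZ HX HZ l κ (Sum.inl R) (Sum.inl (p, k)) =
      if k = κ R then HX s p * HZ R p else 0 := by
    intro p; simp only [thickHZ]; split_ifs <;> ring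
  simp only [h1]
  by_cases h : k = κ R
  · simp only [if_pos h]
    have hc := congrFun (congrFun hCSS s) R
    rw [Matrix.mul_apply] at hc
    simpa [Matrix.transpose_apply] using hc
  · simp [h]

lemma embed_ker (HX : Matrix (Fin nX) (Fin N) (ZMod 2)) {l : ℕ} (k0 : Fin l)
    (v : Fin N → ZMod 2) (hv : HX.mulVec v = 0) :
    (thickHX HX l).mulVec (embed nX k0 v) = 0 := by
  funext sk
  obtain ⟨s, k⟩ := sk
  simp only [Pi.zero_apply]
  rw [thickHX_mulVec_apply]
  have h2 : (∑ k' : Fin (l - 1),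
      if k'.val = k.val ∨ k'.val + 1 = k.val then embed nX k0 v (Sum.inr (s, k')) else 0) = 0 := by
    apply Finset.sum_eq_zero; intro k' _; simp [embed]
  rw [h2, add_zero]
  have h1 : ∀ p, HX s p * embed nX k0 v (Sum.inl (p, k)) =
      if k = k0 then HX s p * v p else 0 := by
    intro p; simp only [embed]; split_ifs <;> ring
  simp only [h1]
  by_cases h : k = k0
  · simp only [if_pos h]
    have hc := congrFun hv s
    simpa [Matrix.mulVec, dotProduct] using hc
  · simp [h]

/-- Partial sums of a thick vector along layers. -/
def pc {N nX l : ℕ} (w : TQubit N nX l → ZMod 2) (p : Fin N) (m : ℕ) : ZMod 2 :=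
  ∑ k : Fin l, if k.val ≤ m then w (Sum.inl (p, k)) else 0

lemma pc_zero {l : ℕ} (h0 : 0 < l) (w : TQubit N nX l → ZMod 2) (p : Fin N) :
    pc w p 0 = w (Sum.inl (p, ⟨0, h0⟩)) := by
  rw [pc]
  have h : ∀ k : Fin l, (if k.val ≤ 0 then w (Sum.inl (p, k)) else 0)
      = (if k.val = 0 then w (Sum.inl (p, k)) else 0) := by
    intro k; congr 1; simp [Nat.le_zero]
  simp only [h]
  exact sum_ite_val 0 h0 _

lemma pc_succ {l : ℕ} {m : ℕ} (hm : m + 1 < l) (w : TQubit N nX l → ZMod 2) (p : Fin N) :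
    pc w p (m + 1) = pc w p m + w (Sum.inl (p, ⟨m + 1, hm⟩)) := by
  rw [pc, pc]
  have h : ∀ k : Fin l, (if k.val ≤ m + 1 then w (Sum.inl (p, k)) else 0)
      = (if k.val ≤ m then w (Sum.inl (p, k)) else 0)
        + (if k.val = m + 1 then w (Sum.inl (p, k)) else 0) := by
    intro k
    split_ifs <;> first | (exfalso; omega) | simp
  simp only [h]
  rw [Finset.sum_add_distrib, sum_ite_val (m + 1) hm]

lemma pc_last {l : ℕ} (h0 : 0 < l) (w : TQubit N nX l → ZMod 2) (p : Fin N) :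
    pc w p (l - 1) = collapse w p := by
  rw [pc, collapse]
  apply Finset.sum_congr rfl
  intro k _
  rw [if_pos (by have := k.isLt; omega)]

lemma collapse_zero_mem_span (HX : Matrix (Fin nX) (Fin N) (ZMod 2))
    (HZ : Matrix (Fin nZ) (Fin N) (ZMod 2)) {l : ℕ} (hl : 2 ≤ l) (κ : Fin nZ → Fin l)
    (w : TQubit N nX l → ZMod 2)
    (hker : (thickHX HX l).mulVec w = 0)
    (hcol : collapse w = 0) :
    w ∈ Submodule.span (ZMod 2) (Set.range (thickHZ HX HZ l κ)) := by
  -- the inr coordinates of w are determined by partial sums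
  have hw_inr : ∀ (s : Fin nX) (m : ℕ) (hm : m < l - 1),
      w (Sum.inr (s, ⟨m, hm⟩)) = ∑ p, HX s p * pc w p m := by
    intro s m
    induction m with
    | zero =>
      intro hm
      have hk := congrFun hker (s, ⟨0, by omega⟩)
      rw [thickHX_mulVec_apply] at hk
      simp only [Pi.zero_apply] at hk
      have hc : ∀ k' : Fin (l - 1),
          (if k'.val = (⟨0, by omega⟩ : Fin l).val ∨ k'.val + 1 = (⟨0, by omega⟩ : Fin l).val
            then w (Sum.inr (s, k')) else 0)
          = (if k'.val = 0 then w (Sum.inr (s, k')) else 0) := by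
        intro k'; congr 1; simp
      rw [Finset.sum_congr rfl (fun k' _ => hc k'), sum_ite_val 0 hm] at hk
      have := z2 _ _ hk
      rw [← this]
      apply Finset.sum_congr rfl
      intro p _
      rw [pc_zero (by omega)]
    | succ m ih =>
      intro hm
      have hmm : m < l - 1 := by omega
      have hk := congrFun hker (s, ⟨m + 1, by omega⟩)
      rw [thickHX_mulVec_apply] at hk
      simp only [Pi.zero_apply] at hk
      have hc : ∀ k' : Fin (l - 1),
          (if k'.val = (⟨m + 1, by omega⟩ : Fin l).val
              ∨ k'.val + 1 = (⟨m + 1, by omega⟩ : Fin l).val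
            then w (Sum.inr (s, k')) else 0)
          = (if k'.val = m + 1 then w (Sum.inr (s, k')) else 0)
            + (if k'.val = m then w (Sum.inr (s, k')) else 0) := by
        intro k'
        simp only [Fin.val_mk]
        split_ifs <;> first | (exfalso; omega) | simp
      rw [Finset.sum_congr rfl (fun k' _ => hc k'), Finset.sum_add_distrib,
        sum_ite_val (m + 1) hm, sum_ite_val m hmm] at hk
      have hstep := z2' _ _ _ hk
      rw [hstep, ih hmm]
      rw [← Finset.sum_add_distrib]
      apply Finset.sum_congr rfl
      intro p _
      rw [pc_succ (by omega : m + 1 < l), mul_add, add_comm]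
  -- w is the combination of type (ii) generators with partial-sum coefficients
  have hrepr : w = ∑ x : Fin N × Fin (l - 1),
      pc w x.1 x.2.val • (fun j => thickHZ HX HZ l κ (Sum.inr x) j) := by
    funext j
    rw [Finset.sum_apply]
    simp only [Pi.smul_apply, smul_eq_mul]
    match j with
    | Sum.inl (q, j') =>
      rw [Fintype.sum_prod_type, Finset.sum_eq_single q]
      rotate_left
      · intro p _ hp
        apply Finset.sum_eq_zero
        intro k _
        have : ¬(q = p) := fun h => hp h.symm
        simp [thickHZ, this]
      · simp
      have hterm : ∀ k : Fin (l - 1),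
          pc w q k.val * thickHZ HX HZ l κ (Sum.inr (q, k)) (Sum.inl (q, j'))
          = (if j'.val = k.val ∨ j'.val = k.val + 1 then pc w q k.val else 0) := by
        intro k
        simp only [thickHZ]
        split_ifs <;> simp_all
      rw [Finset.sum_congr rfl (fun k _ => hterm k)]
      -- case split on the layer j'
      rcases Nat.lt_or_ge j'.val 1 with hj0 | hj1
      · -- j'.val = 0
        have hj : j'.val = 0 := by omega
        have hc : ∀ k : Fin (l - 1),
            (if j'.val = k.val ∨ j'.val = k.val + 1 then pc w q k.val else 0)
            = (if k.val = 0 then pc w q k.val else 0) := by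
          intro k; split_ifs <;> first | (exfalso; omega) | rfl
        rw [Finset.sum_congr rfl (fun k _ => hc k), sum_ite_val 0 (by omega : 0 < l - 1)]
        simp only [Fin.val_mk]
        have hfin0 : (⟨0, by omega⟩ : Fin l) = j' := Fin.ext (by simp [hj])
        rw [pc_zero (by omega : 0 < l), hfin0]
      · rcases Nat.lt_or_ge j'.val (l - 1) with hjm | hjl
        · -- 1 ≤ j'.val < l - 1
          have hc : ∀ k : Fin (l - 1),
              (if j'.val = k.val ∨ j'.val = k.val + 1 then pc w q k.val else 0)
              = (if k.val = j'.val then pc w q k.val else 0)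
                + (if k.val = j'.val - 1 then pc w q k.val else 0) := by
            intro k
            split_ifs <;> first | (exfalso; omega) | simp
          rw [Finset.sum_congr rfl (fun k _ => hc k), Finset.sum_add_distrib,
            sum_ite_val j'.val hjm, sum_ite_val (j'.val - 1) (by omega)]
          have hrec := pc_succ (m := j'.val - 1)
            (by omega : (j'.val - 1) + 1 < l) w q
          have hidx : ((j'.val - 1) + 1) = j'.val := by omega
          have hfin : (⟨(j'.val - 1) + 1, by omega⟩ : Fin l) = j' := by
            apply Fin.ext; simp [hidx]
          rw [hfin] at hrec
          rw [hidx] at hrec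
          simp only [Fin.val_mk]
          rw [hrec]
          exact (by decide : ∀ a b : ZMod 2, b = (a + b) + a) _ _
        · -- j'.val = l - 1
          have hj : j'.val = l - 1 := by omega
          have hc : ∀ k : Fin (l - 1),
              (if j'.val = k.val ∨ j'.val = k.val + 1 then pc w q k.val else 0)
              = (if k.val = l - 2 then pc w q k.val else 0) := by
            intro k
            have := k.isLt
            split_ifs <;> first | (exfalso; omega) | rfl
          rw [Finset.sum_congr rfl (fun k _ => hc k), sum_ite_val (l - 2) (by omega)]
          have hrec := pc_succ (m := l - 2) (by omega : (l - 2) + 1 < l) w q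
          have hidx : (l - 2) + 1 = l - 1 := by omega
          have hfin : (⟨(l - 2) + 1, by omega⟩ : Fin l) = j' := by
            apply Fin.ext; simp [hidx, hj]
          rw [hfin] at hrec
          rw [hidx] at hrec
          rw [pc_last (by omega : 0 < l), hcol, Pi.zero_apply] at hrec
          simp only [Fin.val_mk]
          exact (z2 _ _ hrec.symm).symm
    | Sum.inr (s, j') =>
      rw [Fintype.sum_prod_type]
      have hterm : ∀ (p : Fin N) (k : Fin (l - 1)),
          pc w p k.val * thickHZ HX HZ l κ (Sum.inr (p, k)) (Sum.inr (s, j'))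
          = (if k.val = j'.val then pc w p k.val * HX s p else 0) := by
        intro p k
        simp only [thickHZ]
        split_ifs <;> simp_all
      have hinner : ∀ p : Fin N,
          (∑ k : Fin (l - 1), pc w p k.val * thickHZ HX HZ l κ (Sum.inr (p, k)) (Sum.inr (s, j')))
          = pc w p j'.val * HX s p := by
        intro p
        rw [Finset.sum_congr rfl (fun k _ => hterm p k), sum_ite_val j'.val j'.isLt]
      rw [Finset.sum_congr rfl (fun p _ => hinner p)]
      have := hw_inr s j'.val j'.isLt
      rw [Fin.eta] at this
      rw [this]
      apply Finset.sum_congr rfl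
      intro p _
      ring
  rw [hrepr]
  exact Submodule.sum_mem _ fun x _ =>
    Submodule.smul_mem _ _ (Submodule.subset_span ⟨Sum.inr x, rfl⟩)

lemma exists_logical (HX : Matrix (Fin nX) (Fin N) (ZMod 2))
    (HZ : Matrix (Fin nZ) (Fin N) (ZMod 2)) (hCSS : HX * HZ.transpose = 0)
    (hK : HX.rank + HZ.rank < N) :
    ∃ v : Fin N → ZMod 2, HX.mulVec v = 0 ∧
      v ∉ Submodule.span (ZMod 2) (Set.range HZ) := by
  by_contra h
  push_neg at h
  have hle : LinearMap.ker HX.mulVecLin ≤ Submodule.span (ZMod 2) (Set.range HZ) := by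
    intro v hv
    exact h v (by simpa [Matrix.mulVecLin_apply] using hv)
  have hge : Submodule.span (ZMod 2) (Set.range HZ) ≤ LinearMap.ker HX.mulVecLin := by
    rw [Submodule.span_le]
    rintro _ ⟨R, rfl⟩
    simp only [SetLike.mem_coe, LinearMap.mem_ker, Matrix.mulVecLin_apply]
    funext s
    have hc := congrFun (congrFun hCSS s) R
    rw [Matrix.mul_apply] at hc
    simpa [Matrix.mulVec, dotProduct, Matrix.transpose_apply] using hc
  have heq : LinearMap.ker HX.mulVecLin = Submodule.span (ZMod 2) (Set.range HZ) :=
    le_antisymm hle hge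
  have h1 := LinearMap.finrank_range_add_finrank_ker HX.mulVecLin
  rw [Module.finrank_pi, Fintype.card_fin] at h1
  rw [heq] at h1
  have h2 : HZ.rank = Module.finrank (ZMod 2)
      (Submodule.span (ZMod 2) (Set.range HZ)) := HZ.rank_eq_finrank_span_row
  have h3 : HX.rank = Module.finrank (ZMod 2) (LinearMap.range HX.mulVecLin) := rfl
  omega

end Stmt9Aux

open Stmt9Aux in
/-- For a CSS code with `K ≥ 1` and its thickened code with parameter
`l ≥ 2` and any choice function `κ`, the Z-distance is unchanged: `d̃_Z = d_Z`. -/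
theorem stmt9 (HX : Matrix (Fin nX) (Fin N) (ZMod 2)) (HZ : Matrix (Fin nZ) (Fin N) (ZMod 2))
    (hCSS : HX * HZ.transpose = 0) (l : ℕ) (hl : 2 ≤ l) (κ : Fin nZ → Fin l)
    (hK : 1 ≤ N - HX.rank - HZ.rank) :
    distZ (thickHX HX l) (thickHZ HX HZ l κ) = distZ HX HZ := by
  classical
  have hl0 : 0 < l := by omega
  set k0 : Fin l := ⟨0, hl0⟩ with hk0
  obtain ⟨v0, hv0k, hv0s⟩ := exists_logical HX HZ hCSS (by omega)
  -- forward direction: embedding a logical operator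
  have fwd : ∀ v : Fin N → ZMod 2, HX.mulVec v = 0 →
      v ∉ Submodule.span (ZMod 2) (Set.range HZ) →
      (thickHX HX l).mulVec (embed nX k0 v) = 0 ∧
        embed nX k0 v ∉ Submodule.span (ZMod 2) (Set.range (thickHZ HX HZ l κ)) := by
    intro v hv hs
    refine ⟨embed_ker HX k0 v hv, fun hmem => hs ?_⟩
    have h := collapse_mem_span HX HZ κ _ hmem
    rwa [collapse_embed] at h
  -- backward direction: collapsing a thick logical operator
  have bwd : ∀ w : TQubit N nX l → ZMod 2, (thickHX HX l).mulVec w = 0 →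
      w ∉ Submodule.span (ZMod 2) (Set.range (thickHZ HX HZ l κ)) →
      HX.mulVec (collapse w) = 0 ∧
        collapse w ∉ Submodule.span (ZMod 2) (Set.range HZ) := by
    intro w hker hspan
    constructor
    · funext s
      simp only [Pi.zero_apply]
      rw [Matrix.mulVec, dotProduct]
      have e1 : ∀ p, HX s p * collapse w p = ∑ k : Fin l, HX s p * w (Sum.inl (p, k)) := by
        intro p; rw [collapse, Finset.mul_sum]
      simp only [e1]
      rw [Finset.sum_comm]
      have e2 : ∀ k : Fin l, (∑ p, HX s p * w (Sum.inl (p, k))) =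
          ∑ k' : Fin (l - 1),
            if k'.val = k.val ∨ k'.val + 1 = k.val then w (Sum.inr (s, k')) else 0 := by
        intro k
        have hk := congrFun hker (s, k)
        rw [thickHX_mulVec_apply] at hk
        simp only [Pi.zero_apply] at hk
        exact z2 _ _ hk
      rw [Finset.sum_congr rfl (fun k _ => e2 k), Finset.sum_comm]
      apply Finset.sum_eq_zero
      intro k' _
      have hsplit : ∀ k : Fin l,
          (if k'.val = k.val ∨ k'.val + 1 = k.val then w (Sum.inr (s, k')) else 0)
          = (if k.val = k'.val then w (Sum.inr (s, k')) else 0)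
            + (if k.val = k'.val + 1 then w (Sum.inr (s, k')) else 0) := by
        intro k
        split_ifs <;> first | (exfalso; omega) | simp
      rw [Finset.sum_congr rfl (fun k _ => hsplit k), Finset.sum_add_distrib,
        sum_ite_val k'.val (by have := k'.isLt; omega),
        sum_ite_val (k'.val + 1) (by have := k'.isLt; omega)]
      exact (by decide : ∀ a : ZMod 2, a + a = 0) _
    · intro hmem
      apply hspan
      have hmem' := hmem
      erw [Submodule.mem_span_range_iff_exists_fun] at hmem'
      obtain ⟨c, hc⟩ := hmem'
      set u : TQubit N nX l → ZMod 2 :=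
        ∑ R : Fin nZ, c R • (fun j => thickHZ HX HZ l κ (Sum.inl R) j) with hu
      have hu_mem : u ∈ Submodule.span (ZMod 2) (Set.range (thickHZ HX HZ l κ)) :=
        Submodule.sum_mem _ fun R _ =>
          Submodule.smul_mem _ _ (Submodule.subset_span ⟨Sum.inl R, rfl⟩)
      have huker : (thickHX HX l).mulVec u = 0 := by
        rw [hu, ← Matrix.mulVecLin_apply, map_sum]
        refine Finset.sum_eq_zero fun R _ => ?_
        rw [_root_.map_smul, Matrix.mulVecLin_apply, orth_inl HX HZ hCSS κ R, smul_zero]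
      have hucol : collapse u = collapse w := by
        funext q
        rw [collapse]
        have : ∀ k : Fin l, u (Sum.inl (q, k)) =
            ∑ R : Fin nZ, c R * thickHZ HX HZ l κ (Sum.inl R) (Sum.inl (q, k)) := by
          intro k
          rw [hu, Finset.sum_apply]
          simp [smul_eq_mul]
        rw [Finset.sum_congr rfl (fun k _ => this k), Finset.sum_comm]
        have hRs : ∀ R : Fin nZ,
            (∑ k : Fin l, c R * thickHZ HX HZ l κ (Sum.inl R) (Sum.inl (q, k)))
            = c R * HZ R q := by
          intro R
          rw [← Finset.mul_sum, thickHZ_layer_sum_inl]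
        rw [Finset.sum_congr rfl (fun R _ => hRs R)]
        have := congrFun hc q
        rw [Finset.sum_apply] at this
        simpa [smul_eq_mul] using this
      have hwu_ker : (thickHX HX l).mulVec (w + u) = 0 := by
        rw [Matrix.mulVec_add, hker, huker, add_zero]
      have hwu_col : collapse (w + u) = 0 := by
        funext q
        rw [collapse]
        have : ∀ k : Fin l, (w + u) (Sum.inl (q, k))
            = w (Sum.inl (q, k)) + u (Sum.inl (q, k)) := fun k => rfl
        rw [Finset.sum_congr rfl (fun k _ => this k), Finset.sum_add_distrib]
        have h1 : (∑ k : Fin l, u (Sum.inl (q, k))) = collapse u q := rfl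
        have h2 : (∑ k : Fin l, w (Sum.inl (q, k))) = collapse w q := rfl
        rw [h1, h2, hucol, Pi.zero_apply]
        exact (by decide : ∀ a : ZMod 2, a + a = 0) _
      have hwu_mem := collapse_zero_mem_span HX HZ hl κ (w + u) hwu_ker hwu_col
      have hw_eq : w = (w + u) + u := by
        funext j
        exact (by decide : ∀ a b : ZMod 2, a = (a + b) + b) _ _
      rw [hw_eq]
      exact Submodule.add_mem _ hwu_mem hu_mem
  -- now compare the two infima
  apply le_antisymm
  · -- distZ thick ≤ distZ base
    have hSne : distZ HX HZ ∈ {k | ∃ v : Fin N → ZMod 2, HX.mulVec v = 0 ∧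
        v ∉ Submodule.span (ZMod 2) (Set.range HZ) ∧ wt v = k} :=
      Nat.sInf_mem ⟨wt v0, v0, hv0k, hv0s, rfl⟩
    obtain ⟨v, hv1, hv2, hv3⟩ := hSne
    obtain ⟨hek, hes⟩ := fwd v hv1 hv2
    exact Nat.sInf_le ⟨embed nX k0 v, hek, hes, by rw [wt_embed, hv3]⟩
  · -- distZ base ≤ distZ thick
    obtain ⟨he1, he2⟩ := fwd v0 hv0k hv0s
    have hTne : distZ (thickHX HX l) (thickHZ HX HZ l κ) ∈
        {k | ∃ v : TQubit N nX l → ZMod 2, (thickHX HX l).mulVec v = 0 ∧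
          v ∉ Submodule.span (ZMod 2) (Set.range (thickHZ HX HZ l κ)) ∧ wt v = k} :=
      Nat.sInf_mem ⟨wt (embed nX k0 v0), embed nX k0 v0, he1, he2, rfl⟩
    obtain ⟨ww, hw1, hw2, hw3⟩ := hTne
    obtain ⟨hc1, hc2⟩ := bwd ww hw1 hw2
    calc distZ HX HZ ≤ wt (collapse ww) := Nat.sInf_le ⟨collapse ww, hc1, hc2, rfl⟩
      _ ≤ wt ww := wt_collapse_le k0 ww
      _ = _ := hw3
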